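/- Let G = (V,E) be a DAG, r a visit rule for G, v ∈ V, and let ψ be an r-sequence of G containing v. Let V′ = reach_r(v|ψ), let G′ = (V′,E′) be the sub-DAG of G induced by V′, and let r′ be defined on V′ by r′(u) = {Q∖ψ : Q ∈ r(u) and Q∖ψ ⊆ V′}, and suppose r′(u) ≠ ∅ for every u ∈ V′ so that r′ is a visit rule for G′. Then for every r′-visit ψ′ of G′: (a) the concatenation ψψ′ is an r-sequence of G; (b) for every i = 1,…,|ψ′|, B_r(ψψ′[1..i]) ⊆ B_r(ψ) ∪ B_{r′}(ψ′[1..i]); and (c) b_r(ψψ′) ≤ b_r(ψ) + b_{r′}(ψ′). -/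

import Mathlib

universe u

variable {V : Type u}

/-- Acyclicity of an edge relation (DAG condition). -/
def Acyclic (E : V → V → Prop) : Prop := ∀ v : V, ¬ Relation.TransGen E v v

/-- Immediate predecessors of a vertex. -/
def pre (E : V → V → Prop) (v : V) : Set V := {u | E u v}

/-- Immediate successors of a vertex. -/
def suc (E : V → V → Prop) (v : V) : Set V := {u | E v u}

/-- The reverse DAG edge relation. -/
def Erev (E : V → V → Prop) : V → V → Prop := fun u v => E v u

/-- `r` is a visit rule for the DAG with edge relation `E`. -/
def VisitRule (E : V → V → Prop) (r : V → Set (Set V)) : Prop :=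
  ∀ v : V, (r v).Nonempty ∧ ∀ Q ∈ r v, Q ⊆ pre E v

/-- `ψ` is an `r`-sequence. -/
def IsRSeq (r : V → Set (Set V)) (ψ : List V) : Prop :=
  ψ.Nodup ∧ ∀ i : Fin ψ.length, ∃ Q ∈ r (ψ.get i), ∀ u ∈ Q, u ∈ ψ.take i.1

/-- `ψ` is an `r`-visit: an `r`-sequence containing all vertices. -/
def IsRVisit (r : V → Set (Set V)) (ψ : List V) : Prop :=
  IsRSeq r ψ ∧ ∀ v : V, v ∈ ψ

/-- The `r`-boundary of a sequence. -/
def boundary (r : V → Set (Set V)) (ψ : List V) : Set V :=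
  {v | v ∉ ψ ∧ ∃ Q ∈ r v, Q ≠ (∅ : Set V) ∧ ∀ u ∈ Q, u ∈ ψ}

/-- The `r`-boundary complexity of a sequence. -/
noncomputable def bnd (r : V → Set (Set V)) (ψ : List V) : ℕ :=
  (Finset.Icc 1 ψ.length).sup fun i => (boundary r (ψ.take i)).ncard

/-- Descendants of a vertex. -/
def des (E : V → V → Prop) (v : V) : Set V := {u | Relation.TransGen E v u}

/-- The `r`-enabled reach of `v` given the `r`-sequence `ψ`. -/
def reach (E : V → V → Prop) (r : V → Set (Set V)) (v : V) (ψ : List V) : Set V :=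
  {u | ∃ ψ' : List V, (∀ x ∈ ψ' ++ [u], x ∈ des E v) ∧ IsRSeq r (ψ ++ (ψ' ++ [u]))}


lemma reach_subset_des (E : V → V → Prop) (r : V → Set (Set V)) (v : V) (ψ : List V) :
    reach E r v ψ ⊆ des E v := by
  rintro u ⟨ψ', hdes, _⟩
  exact hdes u (by simp)

lemma reach_not_mem {E : V → V → Prop} {r : V → Set (Set V)} {v : V} {ψ : List V}
    {u : V} (hu : u ∈ reach E r v ψ) : u ∉ ψ := by
  intro hmem
  obtain ⟨ψ'', _, hnd, _⟩ := hu
  rw [List.nodup_append] at hnd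
  exact hnd.2.2 u hmem u (by simp) rfl

lemma isRSeq_append {r : V → Set (Set V)} {a b : List V} (ha : IsRSeq r a)
    (hnd : (a ++ b).Nodup)
    (hb : ∀ j : Fin b.length, ∃ Q ∈ r (b.get j), ∀ u ∈ Q, u ∈ a ∨ u ∈ b.take j.1) :
    IsRSeq r (a ++ b) := by
  refine ⟨hnd, fun i => ?_⟩
  rcases lt_or_ge i.1 a.length with h | h
  · obtain ⟨Q, hQ, hQs⟩ := ha.2 ⟨i.1, h⟩
    refine ⟨Q, ?_, fun u hu => ?_⟩
    · simpa [List.get_eq_getElem, List.getElem_append_left h] using hQ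
    · rw [List.take_append_of_le_length h.le]
      exact hQs u hu
  · have hj : i.1 - a.length < b.length := by
      have h2 : i.1 < a.length + b.length := by
        have := i.2; simpa [List.length_append] using this
      omega
    obtain ⟨Q, hQ, hQs⟩ := hb ⟨i.1 - a.length, hj⟩
    refine ⟨Q, ?_, fun u hu => ?_⟩
    · simpa [List.get_eq_getElem, List.getElem_append_right h] using hQ
    · have : i.1 = a.length + (i.1 - a.length) := by omega
      rw [this, List.take_length_add_append]
      rcases hQs u hu with h' | h'
      · exact List.mem_append_left _ h'
      · exact List.mem_append_right _ h'

lemma isRSeq_snoc {r : V → Set (Set V)} {L : List V} {x : V} (hL : IsRSeq r L) (hx : x ∉ L)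
    {Q : Set V} (hQ : Q ∈ r x) (hs : ∀ u ∈ Q, u ∈ L) : IsRSeq r (L ++ [x]) := by
  refine isRSeq_append hL ?_ ?_
  · exact hL.1.append (List.nodup_singleton x) (by intro a ha hb; simp at hb; subst hb; exact hx ha)
  · intro j
    have hj0 : j.1 = 0 := Nat.lt_one_iff.mp j.2
    refine ⟨Q, ?_, fun u hu => Or.inl (hs u hu)⟩
    simpa [List.get_eq_getElem, hj0] using hQ

theorem stmt_7 {V : Type u} [Fintype V] [DecidableEq V] (E : V → V → Prop) (hG : Acyclic E)
    (r : V → Set (Set V)) (hr : VisitRule E r) (v : V) (ψ : List V)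
    (hψ : IsRSeq r ψ) (hv : v ∈ ψ) (r' : V → Set (Set V))
    (hr' : ∀ u : V, r' u = {Q' | ∃ Q ∈ r u, Q' = Q \ {x | x ∈ ψ} ∧ Q' ⊆ reach E r v ψ})
    (hr'ne : ∀ u ∈ reach E r v ψ, (r' u).Nonempty)
    (ψ' : List V) (hseq : IsRSeq r' ψ')
    (hsub : ∀ x ∈ ψ', x ∈ reach E r v ψ) (hall : ∀ x ∈ reach E r v ψ, x ∈ ψ') :
    IsRSeq r (ψ ++ ψ') ∧
      (∀ i, 1 ≤ i → i ≤ ψ'.length →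
        boundary r (ψ ++ ψ'.take i) ⊆
          boundary r ψ ∪ (boundary r' (ψ'.take i) ∩ reach E r v ψ)) ∧
      bnd r (ψ ++ ψ') ≤
        bnd r ψ + (Finset.Icc 1 ψ'.length).sup
          (fun i => (boundary r' (ψ'.take i) ∩ reach E r v ψ).ncard) := by
  -- basic facts
  have hreachψ : ∀ x ∈ ψ', x ∉ ψ := fun x hx => reach_not_mem (hsub x hx)
  have hnd : (ψ ++ ψ').Nodup :=
    hψ.1.append hseq.1 (fun a ha ha' => hreachψ a ha' ha)
  -- Part (a)
  have hA : IsRSeq r (ψ ++ ψ') := by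
    refine isRSeq_append hψ hnd ?_
    intro j
    obtain ⟨Q', hQ', hQ's⟩ := hseq.2 j
    rw [hr'] at hQ'
    obtain ⟨Q, hQ, hEq, hQr⟩ := hQ'
    refine ⟨Q, hQ, fun u hu => ?_⟩
    by_cases hu' : u ∈ ψ
    · exact Or.inl hu'
    · exact Or.inr (hQ's u (by rw [hEq]; exact ⟨hu, hu'⟩))
  -- Part (b)
  have hB : ∀ i, 1 ≤ i → i ≤ ψ'.length →
      boundary r (ψ ++ ψ'.take i) ⊆
        boundary r ψ ∪ (boundary r' (ψ'.take i) ∩ reach E r v ψ) := by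
    intro i _ _ x hx
    obtain ⟨hxmem, Q, hQ, hQne, hQs⟩ := hx
    by_cases hQψ : ∀ u ∈ Q, u ∈ ψ
    · exact Or.inl ⟨fun h => hxmem (List.mem_append_left _ h), Q, hQ, hQne, hQψ⟩
    · right
      push_neg at hQψ
      obtain ⟨q, hqQ, hqψ⟩ := hQψ
      have hQ'sub : ∀ u ∈ Q, u ∉ ψ → u ∈ ψ'.take i := fun u hu hu' =>
        (List.mem_append.mp (hQs u hu)).resolve_left hu'
      have hQ'reach : Q \ {x | x ∈ ψ} ⊆ reach E r v ψ := fun u hu =>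
        hsub u (List.mem_of_mem_take (hQ'sub u hu.1 hu.2))
      have hxψ : x ∉ ψ := fun h => hxmem (List.mem_append_left _ h)
      have hxreach : x ∈ reach E r v ψ := by
        by_cases hxψ' : x ∈ ψ'
        · exact hsub x hxψ'
        · -- construct the witness sequence ψ'
          have hxL : x ∉ ψ ++ ψ' := by
            intro h; rcases List.mem_append.mp h with h | h
            · exact hxψ h
            · exact hxψ' h
          have hQL : ∀ u ∈ Q, u ∈ ψ ++ ψ' := fun u hu => by
            rcases List.mem_append.mp (hQs u hu) with h | h
            · exact List.mem_append_left _ h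
            · exact List.mem_append_right _ (List.mem_of_mem_take h)
          have hseqx : IsRSeq r ((ψ ++ ψ') ++ [x]) := isRSeq_snoc hA hxL hQ hQL
          rw [List.append_assoc] at hseqx
          have hq_reach : q ∈ reach E r v ψ :=
            hsub q (List.mem_of_mem_take (hQ'sub q hqQ hqψ))
          have hqx : E q x := (hr x).2 Q hQ hqQ
          have hxdes : x ∈ des E v :=
            Relation.TransGen.tail (reach_subset_des E r v ψ hq_reach) hqx
          exact ⟨ψ', fun y hy => by
            rcases List.mem_append.mp hy with h | h
            · exact reach_subset_des E r v ψ (hsub y h)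
            · simp at h; subst h; exact hxdes, hseqx⟩
      refine ⟨⟨fun h => hxmem (List.mem_append_right _ h), Q \ {x | x ∈ ψ}, ?_, ?_, ?_⟩, hxreach⟩
      · rw [hr']; exact ⟨Q, hQ, rfl, hQ'reach⟩
      · intro h
        have : q ∈ (∅ : Set V) := h ▸ (⟨hqQ, hqψ⟩ : q ∈ Q \ {x | x ∈ ψ})
        exact this
      · intro u hu; exact hQ'sub u hu.1 hu.2
  -- Part (c)
  refine ⟨hA, hB, ?_⟩
  have hψne : 1 ≤ ψ.length := List.length_pos_iff.mpr (List.ne_nil_of_mem hv)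
  have hbndψ : ∀ k, 1 ≤ k → k ≤ ψ.length → (boundary r (ψ.take k)).ncard ≤ bnd r ψ := by
    intro k h1 h2
    exact Finset.le_sup (f := fun i => (boundary r (ψ.take i)).ncard)
      (Finset.mem_Icc.mpr ⟨h1, h2⟩)
  apply Finset.sup_le
  intro i hi
  rw [Finset.mem_Icc, List.length_append] at hi
  rcases le_or_gt i ψ.length with h | h
  · rw [List.take_append_of_le_length h]
    calc (boundary r (ψ.take i)).ncard ≤ bnd r ψ := hbndψ i hi.1 h
    _ ≤ _ := Nat.le_add_right _ _
  · have hrw : i = ψ.length + (i - ψ.length) := by omega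
    set j := i - ψ.length with hj
    have hj1 : 1 ≤ j := by omega
    have hj2 : j ≤ ψ'.length := by omega
    rw [hrw, List.take_length_add_append]
    calc (boundary r (ψ ++ ψ'.take j)).ncard
        ≤ (boundary r ψ ∪ (boundary r' (ψ'.take j) ∩ reach E r v ψ)).ncard :=
          Set.ncard_le_ncard (hB j hj1 hj2) (Set.toFinite _)
      _ ≤ (boundary r ψ).ncard + (boundary r' (ψ'.take j) ∩ reach E r v ψ).ncard :=
          Set.ncard_union_le _ _
      _ ≤ bnd r ψ + (Finset.Icc 1 ψ'.length).sup
            (fun i => (boundary r' (ψ'.take i) ∩ reach E r v ψ).ncard) := by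
          apply Nat.add_le_add
          · have := hbndψ ψ.length hψne le_rfl
            rwa [List.take_length] at this
          · exact Finset.le_sup (f := fun i => (boundary r' (ψ'.take i) ∩ reach E r v ψ).ncard)
              (Finset.mem_Icc.mpr ⟨hj1, hj2⟩)
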